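/- Let $z_1,\dots,z_n$ be nonnegative reals. Then $\sum_{k=1}^{n} \frac{z_k}{\sqrt{\max\{1, \sum_{j=1}^{k-1} z_j\}}} \le (\sqrt{2}+1)\sqrt{\max\{1, \sum_{k=1}^{n} z_k\}}$, provided $z_k \le \sum_{j=1}^{k-1} z_j$ for each $k \ge 2$ and $z_1 \le 1$. -/

import Mathlib

open Finset

noncomputable def joaF (S : ℝ) : ℝ :=
  if S ≤ 1 then S + Real.sqrt 2 else (Real.sqrt 2 + 1) * Real.sqrt S

lemma joaF_nonneg (S : ℝ) (hS : 0 ≤ S) : 0 ≤ joaF S := by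
  unfold joaF
  split
  · positivity
  · positivity

lemma joaF_step (S w : ℝ) (hS : 0 ≤ S) (hw : 0 ≤ w) (hwle : w ≤ max 1 S) :
    joaF S + w / Real.sqrt (max 1 S) ≤ joaF (S + w) := by
  rcases le_or_gt S 1 with h1 | h1
  · have hmax : max 1 S = 1 := max_eq_left h1
    rw [hmax] at hwle ⊢
    rw [Real.sqrt_one, div_one]
    rcases le_or_gt (S + w) 1 with h2 | h2
    · rw [joaF, joaF, if_pos h1, if_pos h2]; linarith
    · rw [joaF, joaF, if_pos h1, if_neg (not_le.mpr h2)]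
      set t := S + w with ht
      have ht0 : 0 ≤ t := by linarith
      have ht2 : t ≤ 2 := by linarith
      set u := Real.sqrt t with hu
      have hu1 : 1 ≤ u := by
        rw [hu]
        exact Real.one_le_sqrt.mpr h2.le
      have hu2 : u ≤ Real.sqrt 2 := Real.sqrt_le_sqrt ht2
      have husq : u ^ 2 = t := Real.sq_sqrt ht0
      have key : 0 ≤ (u - 1) * (Real.sqrt 2 - u) :=
        mul_nonneg (by linarith) (by linarith)
      nlinarith [key, husq]
  · have hmax : max 1 S = S := max_eq_right h1.le
    rw [hmax] at hwle ⊢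
    rw [joaF, joaF, if_neg (not_le.mpr h1), if_neg (not_le.mpr (by linarith))]
    set a := Real.sqrt S with ha
    set b := Real.sqrt (S + w) with hb
    have haS : a ^ 2 = S := Real.sq_sqrt (by linarith)
    have hbS : b ^ 2 = S + w := Real.sq_sqrt (by linarith)
    have hapos : 0 < a := Real.sqrt_pos.mpr (by linarith)
    have hab : a ≤ b := Real.sqrt_le_sqrt (by linarith)
    have hb2 : b ≤ Real.sqrt 2 * a := by
      rw [hb, ha, ← Real.sqrt_mul (by norm_num : (0:ℝ) ≤ 2)]
      exact Real.sqrt_le_sqrt (by linarith)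
    have key : 0 ≤ (b - a) * (Real.sqrt 2 * a - b) :=
      mul_nonneg (by linarith) (by linarith)
    rw [← (mul_le_mul_iff_of_pos_right hapos :
      ((Real.sqrt 2 + 1) * a + w / a) * a ≤ (Real.sqrt 2 + 1) * b * a ↔ _)]
    have hdiv : w / a * a = w := div_mul_cancel₀ w (ne_of_gt hapos)
    nlinarith [key, haS, hbS, hdiv]

lemma joaF_final (S : ℝ) (hS : 0 ≤ S) :
    joaF S ≤ (Real.sqrt 2 + 1) * Real.sqrt (max 1 S) := by
  rcases le_or_gt S 1 with h1 | h1
  · rw [max_eq_left h1, Real.sqrt_one, joaF, if_pos h1]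
    linarith
  · rw [max_eq_right h1.le, joaF, if_neg (not_le.mpr h1)]

/-- Lemma 19 of Jaksch–Ortner–Auer (2010): sum of increments normalized by the square
root of the running total is bounded by `(√2 + 1)` times the square root of the final total. -/
theorem normalized_increment_sum_bound
    (n : ℕ) (z : ℕ → ℝ) (hz : ∀ k, 0 ≤ z k)
    (h1 : z 1 ≤ 1)
    (hsum : ∀ k, 2 ≤ k → k ≤ n → z k ≤ ∑ j ∈ Finset.Icc 1 (k - 1), z j) :
    ∑ k ∈ Finset.Icc 1 n, z k / Real.sqrt (max 1 (∑ j ∈ Finset.Icc 1 (k - 1), z j)) ≤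
      (Real.sqrt 2 + 1) * Real.sqrt (max 1 (∑ k ∈ Finset.Icc 1 n, z k)) := by
  have hZnn : ∀ m : ℕ, 0 ≤ ∑ j ∈ Finset.Icc 1 m, z j := fun m =>
    Finset.sum_nonneg fun j _ => hz j
  have key : ∀ m : ℕ, m ≤ n →
      ∑ k ∈ Finset.Icc 1 m, z k / Real.sqrt (max 1 (∑ j ∈ Finset.Icc 1 (k - 1), z j)) ≤
        joaF (∑ k ∈ Finset.Icc 1 m, z k) := by
    intro m
    induction m with
    | zero =>
      intro _
      simp only [Finset.Icc_eq_empty_of_lt (by norm_num : (0:ℕ) < 1), Finset.sum_empty]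
      exact joaF_nonneg 0 le_rfl
    | succ m ih =>
      intro hm
      have hm' : m ≤ n := Nat.le_of_succ_le hm
      rw [Finset.sum_Icc_succ_top (Nat.succ_le_succ (Nat.zero_le m)),
          Finset.sum_Icc_succ_top (Nat.succ_le_succ (Nat.zero_le m))]
      have hred : (m + 1) - 1 = m := Nat.succ_sub_one m
      rw [hred]
      have hle : z (m + 1) ≤ max 1 (∑ j ∈ Finset.Icc 1 m, z j) := by
        rcases Nat.eq_zero_or_pos m with hm0 | hm0
        · subst hm0
          have h0 : (∑ j ∈ Finset.Icc 1 0, z j) = 0 := by simp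
          rw [h0]
          exact le_max_of_le_left h1
        · exact le_max_of_le_right (hsum (m + 1) (Nat.succ_le_succ hm0) hm)
      calc _ ≤ joaF (∑ k ∈ Finset.Icc 1 m, z k) +
              z (m + 1) / Real.sqrt (max 1 (∑ j ∈ Finset.Icc 1 m, z j)) := by
              have := ih hm'
              linarith
        _ ≤ joaF ((∑ k ∈ Finset.Icc 1 m, z k) + z (m + 1)) :=
              joaF_step _ _ (hZnn m) (hz (m + 1)) hle
  exact le_trans (key n le_rfl) (joaF_final _ (hZnn n))
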